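/- Let U, V be finite-dimensional vector spaces over a field F with dim U = dim V, let L ≤ Lin(U,V) be a linear subspace spanned by an element h and some rank-one maps, and let g : V → U be an invertible linear map such that gh is idempotent. If Env(gL)·ker(gh) ⊆ gh(U), then h has maximum rank among elements of L; moreover there exists a subspace W ≤ U with rank(h) = dim U − (dim W − dim(L·W)). -/

import Mathlib

theorem stmt3 (F U V : Type*) [Field F] [AddCommGroup U] [Module F U]
    [AddCommGroup V] [Module F V] [FiniteDimensional F U] [FiniteDimensional F V]
    (hdim : Module.finrank F U = Module.finrank F V)
    (L : Submodule F (U →ₗ[F] V)) (h : U →ₗ[F] V) (hh : h ∈ L)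
    (S : Set (U →ₗ[F] V))
    (hS1 : ∀ f ∈ S, Module.finrank F (LinearMap.range f) = 1)
    (hspan : L = Submodule.span F (insert h S))
    (g : V ≃ₗ[F] U)
    (hidem : (g.toLinearMap ∘ₗ h) ∘ₗ (g.toLinearMap ∘ₗ h) = g.toLinearMap ∘ₗ h)
    (henv : ∀ hs : List (U →ₗ[F] U), hs ≠ [] →
        (∀ f ∈ hs, ∃ f' ∈ L, f = g.toLinearMap ∘ₗ f') →
        ∀ v ∈ LinearMap.ker (g.toLinearMap ∘ₗ h),
          hs.prod v ∈ LinearMap.range (g.toLinearMap ∘ₗ h)) :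
    (∀ h' ∈ L, Module.finrank F (LinearMap.range h') ≤ Module.finrank F (LinearMap.range h)) ∧
    ∃ W : Submodule F U,
      (Module.finrank F (LinearMap.range h) : ℤ) =
        (Module.finrank F U : ℤ) -
          ((Module.finrank F W : ℤ) -
            (Module.finrank F (Submodule.span F {v : V | ∃ f ∈ L, ∃ w ∈ W, v = f w}) : ℤ)) := by
  classical
  set G : V →ₗ[F] U := g.toLinearMap with hG
  set E : U →ₗ[F] U := G ∘ₗ h with hE
  have hEE : ∀ u : U, E (E u) = E u := by
    intro u
    have := congrArg (fun f : U →ₗ[F] U => f u) hidem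
    simpa using this
  set B : Submodule F U := LinearMap.ker E with hB
  set A : Submodule F U := LinearMap.range E with hA
  set Gen : Set U := {u : U | ∃ hs : List (U →ₗ[F] U), hs ≠ [] ∧
      (∀ f ∈ hs, ∃ f' ∈ L, f = G ∘ₗ f') ∧ ∃ b ∈ B, u = hs.prod b} with hGen
  set N : Submodule F U := Submodule.span F Gen with hN
  have hNA : N ≤ A := by
    rw [hN, Submodule.span_le]
    rintro u ⟨hs, hne, hmem, b, hb, rfl⟩
    exact henv hs hne hmem b hb
  -- fact 2 : (G ∘ₗ f') b ∈ N for f' ∈ L, b ∈ B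
  have fact2 : ∀ f' ∈ L, ∀ b ∈ B, (G ∘ₗ f') b ∈ N := by
    intro f' hf' b hb
    apply Submodule.subset_span
    refine ⟨[G ∘ₗ f'], by simp, ?_, b, hb, by simp⟩
    intro f hf
    simp only [List.mem_singleton] at hf
    exact ⟨f', hf', hf⟩
  -- fact 3 : (G ∘ₗ f') n ∈ N for f' ∈ L, n ∈ N
  have fact3 : ∀ f' ∈ L, ∀ n ∈ N, (G ∘ₗ f') n ∈ N := by
    intro f' hf' n hn
    induction hn using Submodule.span_induction with
    | mem x hx =>
      obtain ⟨hs, hne, hmem, b, hb, rfl⟩ := hx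
      apply Submodule.subset_span
      refine ⟨(G ∘ₗ f') :: hs, by simp, ?_, b, hb, ?_⟩
      · intro f hf
        rcases List.mem_cons.mp hf with hf | hf
        · exact ⟨f', hf', hf⟩
        · exact hmem f hf
      · simp [List.prod_cons]
    | zero => simpa using N.zero_mem
    | add x y hx hy ihx ihy => simpa [map_add] using N.add_mem ihx ihy
    | smul c x hx ihx => simpa [map_smul] using N.smul_mem c ihx
  -- key rank bound: for f' ∈ L, rank (G ∘ₗ f') ≤ rank E
  have key : ∀ f' ∈ L,
      Module.finrank F (LinearMap.range (G ∘ₗ f')) ≤ Module.finrank F A := by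
    intro f' hf'
    set m : U →ₗ[F] U := G ∘ₗ f' with hm
    set τ : (A × N) →ₗ[F] U := (m ∘ₗ A.subtype).coprod N.subtype with hτ
    have hr : LinearMap.range m ≤ LinearMap.range τ := by
      rintro _ ⟨u, rfl⟩
      have hbu : u - E u ∈ B := by
        simp only [hB, LinearMap.mem_ker, map_sub, hEE, sub_self]
      have h1 : m (u - E u) ∈ N := fact2 f' hf' _ hbu
      refine ⟨(⟨E u, LinearMap.mem_range_self E u⟩, ⟨m (u - E u), h1⟩), ?_⟩
      simp only [hτ, LinearMap.coprod_apply, LinearMap.comp_apply, Submodule.coe_subtype]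
      rw [← map_add]
      congr 1
      abel
    -- injective map from N into ker τ
    have fact3' : ∀ x ∈ N, m x ∈ N := fun x hx => fact3 f' hf' x hx
    set mN : N →ₗ[F] N := m.restrict fact3' with hmN
    set ψ : N →ₗ[F] (A × N) := (Submodule.inclusion hNA).prod (-mN) with hψ
    have hψker : LinearMap.range ψ ≤ LinearMap.ker τ := by
      rintro _ ⟨n, rfl⟩
      simp only [LinearMap.mem_ker, hψ, hτ, LinearMap.prod_apply, Pi.prod,
        LinearMap.coprod_apply, LinearMap.comp_apply, Submodule.coe_subtype,
        LinearMap.neg_apply]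
      show m ((Submodule.inclusion hNA n : A) : U) + ((-mN n : N) : U) = 0
      have h1 : ((Submodule.inclusion hNA n : A) : U) = (n : U) := rfl
      have h2 : ((-mN n : N) : U) = -(m (n : U)) := rfl
      rw [h1, h2]
      abel
    have hψinj : Function.Injective ψ := by
      intro x y hxy
      have hfst : Submodule.inclusion hNA x = Submodule.inclusion hNA y := congrArg Prod.fst hxy
      exact Submodule.inclusion_injective hNA hfst
    have hN_le_ker : Module.finrank F N ≤ Module.finrank F (LinearMap.ker τ) := by
      have h1 : Module.finrank F N = Module.finrank F (LinearMap.range ψ) :=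
        (LinearMap.finrank_range_of_inj hψinj).symm
      rw [h1]
      exact Submodule.finrank_mono hψker
    have hrn : Module.finrank F (LinearMap.range τ) + Module.finrank F (LinearMap.ker τ)
        = Module.finrank F (A × N) := LinearMap.finrank_range_add_finrank_ker τ
    have hprod : Module.finrank F (A × N) = Module.finrank F A + Module.finrank F N :=
      Module.finrank_prod
    have hfin : Module.finrank F (LinearMap.range m) ≤ Module.finrank F (LinearMap.range τ) :=
      Submodule.finrank_mono hr
    omega
  -- translating ranks through g
  have hrank_comp : ∀ f : U →ₗ[F] V,
      Module.finrank F (LinearMap.range (G ∘ₗ f)) = Module.finrank F (LinearMap.range f) := by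
    intro f
    rw [LinearMap.range_comp]
    exact LinearEquiv.finrank_map_eq g _
  have hAh : Module.finrank F A = Module.finrank F (LinearMap.range h) := by
    rw [hA, hE]; exact hrank_comp h
  constructor
  · intro h' hh'
    have := key h' hh'
    rw [hrank_comp h', hAh] at this
    exact this
  -- part 2
  · refine ⟨B ⊔ N, ?_⟩
    set W : Submodule F U := B ⊔ N with hW
    set X : Set V := {v : V | ∃ f ∈ L, ∃ w ∈ W, v = f w} with hX
    set LW : Submodule F V := Submodule.span F X with hLW
    -- map G LW = N
    have hmap : Submodule.map G LW = N := by
      rw [hLW, Submodule.map_span]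
      apply le_antisymm
      · rw [Submodule.span_le]
        rintro _ ⟨_, ⟨f, hf, w, hw, rfl⟩, rfl⟩
        rw [hW] at hw
        obtain ⟨b, hb, n, hn, rfl⟩ := Submodule.mem_sup.mp hw
        have : G (f (b + n)) = (G ∘ₗ f) b + (G ∘ₗ f) n := by
          simp [map_add]
        rw [this]
        exact N.add_mem (fact2 f hf b hb) (fact3 f hf n hn)
      · rw [hN, Submodule.span_le]
        rintro u ⟨hs, hne, hmem, b, hb, rfl⟩
        apply Submodule.subset_span
        match hs, hne with
        | f₀ :: t, _ =>
          obtain ⟨f₀', hf₀', rfl⟩ := hmem f₀ (List.mem_cons_self)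
          rcases eq_or_ne t [] with rfl | ht
          · refine ⟨f₀' b, ⟨f₀', hf₀', b, ?_, rfl⟩, by simp⟩
            exact Submodule.mem_sup_left hb
          · have htN : t.prod b ∈ N := by
              apply Submodule.subset_span
              exact ⟨t, ht, fun f hf => hmem f (List.mem_cons_of_mem _ hf), b, hb, rfl⟩
            refine ⟨f₀' (t.prod b), ⟨f₀', hf₀', t.prod b, Submodule.mem_sup_right htN, rfl⟩, ?_⟩
            simp [List.prod_cons]
    have hLWN : Module.finrank F LW = Module.finrank F N := by
      have := LinearEquiv.finrank_map_eq g LW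
      rw [← hG] at this
      rw [← this, hmap]
    -- finrank W = finrank B + finrank N
    have hBN : B ⊓ N = ⊥ := by
      rw [eq_bot_iff]
      rintro x ⟨hxB, hxN⟩
      have hxA : x ∈ A := hNA hxN
      obtain ⟨y, rfl⟩ := hxA
      have : E (E y) = 0 := hxB
      rw [hEE] at this
      simp [this]
    have hWdim : Module.finrank F W + 0 = Module.finrank F B + Module.finrank F N := by
      have := Submodule.finrank_sup_add_finrank_inf_eq B N
      rw [hBN] at this
      simpa using this
    have hrn : Module.finrank F A + Module.finrank F B = Module.finrank F U := by
      rw [hA, hB]; exact LinearMap.finrank_range_add_finrank_ker E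
    have goal_nat : Module.finrank F (LinearMap.range h) + Module.finrank F W
        = Module.finrank F U + Module.finrank F LW := by omega
    push_cast
    omega
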